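/- For every positive integer N, the Hartley matrix H_N is symmetric, satisfies H_N² = 1 (the identity matrix), and is a member of the unitary group of N×N complex matrices. -/

import Mathlib

/-- The `cas` function: `cas x = cos x + sin x`. -/
noncomputable def cas (x : ℝ) : ℝ := Real.cos x + Real.sin x

/-- The Hartley matrix of size `N`, indexed by `ZMod N`. -/
noncomputable def hartleyMatrix (N : ℕ) : Matrix (ZMod N) (ZMod N) ℂ :=
  fun a y => ((cas (2 * Real.pi * a.val * y.val / N) / Real.sqrt N : ℝ) : ℂ)

open Complex Finset in
lemma hartley_sum_exp (N : ℕ) [NeZero N] (m : ℤ) :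
    ∑ y ∈ Finset.range N, Complex.exp (2 * Real.pi * Complex.I * m * y / N)
      = if (N : ℤ) ∣ m then (N : ℂ) else 0 := by
  have hN : (N : ℂ) ≠ 0 := Nat.cast_ne_zero.2 (NeZero.ne N)
  have h2πI : (2 * (Real.pi : ℂ) * Complex.I) ≠ 0 := by
    simp [Real.pi_ne_zero, Complex.I_ne_zero]
  set ζ : ℂ := Complex.exp (2 * Real.pi * Complex.I * m / N) with hζ
  have hpow : ∀ y : ℕ, Complex.exp (2 * Real.pi * Complex.I * m * y / N) = ζ ^ y := by
    intro y
    rw [hζ, ← Complex.exp_nat_mul]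
    ring_nf
  simp_rw [hpow]
  have hζN : ζ ^ N = 1 := by
    rw [hζ, ← Complex.exp_nat_mul, Complex.exp_eq_one_iff]
    exact ⟨m, by field_simp⟩
  have hζ1 : ζ = 1 ↔ (N : ℤ) ∣ m := by
    rw [hζ, Complex.exp_eq_one_iff]
    constructor
    · rintro ⟨n, hn⟩
      refine ⟨n, ?_⟩
      have : (m : ℂ) = N * n := by
        field_simp at hn
        have h := hn
        -- 2πI * m = n * (2πI) * N  (after clearing denominators)
        have h2 : (2 * (Real.pi : ℂ) * Complex.I) * m
            = (2 * (Real.pi : ℂ) * Complex.I) * (N * n) := by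
          rw [mul_comm] at h ⊢
          linear_combination (2 * (Real.pi : ℂ) * Complex.I) * h
        exact mul_left_cancel₀ h2πI h2
      exact_mod_cast this
    · rintro ⟨n, rfl⟩
      exact ⟨n, by push_cast; field_simp⟩
  by_cases h : (N : ℤ) ∣ m
  · simp [hζ1.2 h, h]
  · have hne : ζ ≠ 1 := fun h1 => h (hζ1.1 h1)
    rw [geom_sum_eq hne, hζN]
    simp [h]

open Complex Finset in
lemma hartley_sum_cos (N : ℕ) [NeZero N] (m : ℤ) :
    ∑ y ∈ Finset.range N, Real.cos (2 * Real.pi * m * y / N)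
      = if (N : ℤ) ∣ m then (N : ℝ) else 0 := by
  have h := hartley_sum_exp N m
  have harg : ∀ y : ℕ, 2 * Real.pi * Complex.I * m * y / N
      = ((2 * Real.pi * m * y / N : ℝ) : ℂ) * Complex.I := by
    intro y; push_cast; ring
  simp_rw [harg] at h
  have := congrArg Complex.re h
  rw [Complex.re_sum] at this
  simp_rw [Complex.exp_ofReal_mul_I_re] at this
  rw [this]
  split <;> simp

open Complex Finset in
lemma hartley_sum_sin (N : ℕ) [NeZero N] (m : ℤ) :
    ∑ y ∈ Finset.range N, Real.sin (2 * Real.pi * m * y / N) = 0 := by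
  have h := hartley_sum_exp N m
  have harg : ∀ y : ℕ, 2 * Real.pi * Complex.I * m * y / N
      = ((2 * Real.pi * m * y / N : ℝ) : ℂ) * Complex.I := by
    intro y; push_cast; ring
  simp_rw [harg] at h
  have := congrArg Complex.im h
  rw [Complex.im_sum] at this
  simp_rw [Complex.exp_ofReal_mul_I_im] at this
  rw [this]
  split <;> simp

lemma cas_mul_cas (u v : ℝ) : cas u * cas v = Real.cos (u - v) + Real.sin (u + v) := by
  simp only [cas, Real.cos_sub, Real.sin_add]
  ring

/-- The Hartley matrix is symmetric, squares to the identity, and is unitary. -/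
theorem hartleyMatrix_symm_sq_one_unitary (N : ℕ) [NeZero N] :
    (hartleyMatrix N).IsSymm ∧
      hartleyMatrix N * hartleyMatrix N = 1 ∧
        hartleyMatrix N ∈ Matrix.unitaryGroup (ZMod N) ℂ := by
  have hNR : (N : ℝ) ≠ 0 := Nat.cast_ne_zero.2 (NeZero.ne N)
  have hsymm : (hartleyMatrix N).IsSymm := by
    ext a b
    simp only [Matrix.transpose_apply, hartleyMatrix]
    congr 3
    ring_nf
  have hsq : hartleyMatrix N * hartleyMatrix N = 1 := by
    ext a b
    rw [Matrix.mul_apply, Matrix.one_apply]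
    -- convert sum over ZMod N to sum over range N
    have hbij : ∑ y : ZMod N, hartleyMatrix N a y * hartleyMatrix N y b
        = ∑ i ∈ Finset.range N, ((cas (2 * Real.pi * a.val * i / N) / Real.sqrt N
            * (cas (2 * Real.pi * i * b.val / N) / Real.sqrt N) : ℝ) : ℂ) := by
      rw [← Finset.sum_attach (Finset.range N)]
      refine Finset.sum_nbij' (fun y => ⟨y.val, Finset.mem_range.2 (ZMod.val_lt y)⟩)
        (fun i => ((i : ℕ) : ZMod N)) (fun _ _ => Finset.mem_attach _ _)
        (fun _ _ => Finset.mem_univ _) (fun y _ => ZMod.natCast_rightInverse y)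
        (fun i _ => by
          ext
          exact ZMod.val_natCast_of_lt (Finset.mem_range.1 i.2)) ?_
      intro y _
      simp [hartleyMatrix]
    rw [hbij]
    rw [← Complex.ofReal_sum]
    have hcas : ∀ i : ℕ, cas (2 * Real.pi * a.val * i / N) / Real.sqrt N
        * (cas (2 * Real.pi * i * b.val / N) / Real.sqrt N)
        = (Real.cos (2 * Real.pi * ((a.val : ℤ) - (b.val : ℤ)) * i / N)
            + Real.sin (2 * Real.pi * ((a.val : ℤ) + (b.val : ℤ)) * i / N)) / N := by
      intro i
      rw [div_mul_div_comm, Real.mul_self_sqrt (Nat.cast_nonneg N), cas_mul_cas]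
      congr 2
      · push_cast; ring
      · push_cast; ring
    simp_rw [hcas, ← Finset.sum_div, Finset.sum_add_distrib]
    have hc := hartley_sum_cos N ((a.val : ℤ) - (b.val : ℤ))
    have hs := hartley_sum_sin N ((a.val : ℤ) + (b.val : ℤ))
    push_cast at hc hs
    simp only [Int.cast_natCast]
    rw [hc, hs, add_zero]
    have hdvd : (N : ℤ) ∣ ((a.val : ℤ) - (b.val : ℤ)) ↔ a = b := by
      rw [← ZMod.intCast_zmod_eq_zero_iff_dvd]
      push_cast
      rw [sub_eq_zero, ZMod.natCast_rightInverse a, ZMod.natCast_rightInverse b]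
    by_cases hab : a = b
    · simp [hdvd.2 hab, hab, div_self hNR]
    · rw [if_neg (fun h => hab (hdvd.1 h)), if_neg hab]
      simp
  refine ⟨hsymm, hsq, ?_⟩
  have hstar : star (hartleyMatrix N) = hartleyMatrix N := by
    ext a b
    rw [Matrix.star_apply]
    have := congrFun (congrFun hsymm.eq b) a
    rw [Matrix.transpose_apply] at this
    rw [← this]
    simp [hartleyMatrix]
  rw [Matrix.mem_unitaryGroup_iff, hstar]
  exact hsq
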